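/- (Proposition 2) Let A be a Hurwitz d×d real matrix and x₀ ∈ ℝ^d \ {0}. Then for every point y₀ ∈ L_{x₀} one has T_cut(y₀) ≤ T_cut(x₀). -/

import Mathlib

open Matrix Set Filter Topology

noncomputable section

/-- A real square matrix is *Hurwitz* if all its (complex) eigenvalues,
i.e. the roots of its characteristic polynomial over `ℂ`, have negative real part. -/
def IsHurwitz {d : ℕ} (A : Matrix (Fin d) (Fin d) ℝ) : Prop :=
  ∀ μ : ℂ, (A.map (algebraMap ℝ ℂ)).charpoly.IsRoot μ → μ.re < 0

/-- The trajectory `x(t) = e^{tA} x₀` of the linear system `ẋ = Ax`. -/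
def traj {d : ℕ} (A : Matrix (Fin d) (Fin d) ℝ) (x₀ : Fin d → ℝ) (t : ℝ) : Fin d → ℝ :=
  (NormedSpace.exp (t • A)).mulVec x₀

/-- Symmetrized convex hull `co_s X = co (X ∪ (−X))`. -/
def symCo {d : ℕ} (X : Set (Fin d → ℝ)) : Set (Fin d → ℝ) :=
  convexHull ℝ (X ∪ (-X))

/-- `G = co_s {x(t) : t ≥ 0}`, the symmetrized convex hull of the whole trajectory. -/
def trajHull {d : ℕ} (A : Matrix (Fin d) (Fin d) ℝ) (x₀ : Fin d → ℝ) : Set (Fin d → ℝ) :=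
  symCo (traj A x₀ '' Ici (0:ℝ))

/-- `T > 0` is a *cut tail point* of the trajectory starting at `x₀` if `x(t)` lies in the
relative (intrinsic) interior of `G` for every `t ≥ T`. -/
def IsCutTailPoint {d : ℕ} (A : Matrix (Fin d) (Fin d) ℝ) (x₀ : Fin d → ℝ) (T : ℝ) : Prop :=
  0 < T ∧ ∀ t, T ≤ t → traj A x₀ t ∈ intrinsicInterior ℝ (trajHull A x₀)

/-- `T_cut(x₀)`: the infimum of all cut tail points of the trajectory starting at `x₀`. -/
def Tcut {d : ℕ} (A : Matrix (Fin d) (Fin d) ℝ) (x₀ : Fin d → ℝ) : ℝ :=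
  sInf {T | IsCutTailPoint A x₀ T}

/-- `L_{x₀}`: the minimal `A`-invariant linear subspace of `ℝ^d` containing `x₀`. -/
def minInv {d : ℕ} (A : Matrix (Fin d) (Fin d) ℝ) (x₀ : Fin d → ℝ) : Submodule ℝ (Fin d → ℝ) :=
  sInf {L | x₀ ∈ L ∧ ∀ v ∈ L, A.mulVec v ∈ L}

/-- A point `x₀` is *generic* if `dim L_{x₀}` equals the degree of the minimal polynomial of `A`. -/
def IsGeneric {d : ℕ} (A : Matrix (Fin d) (Fin d) ℝ) (x₀ : Fin d → ℝ) : Prop :=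
  Module.finrank ℝ (minInv A x₀) = (minpoly ℝ A).natDegree

namespace TcutAux

variable {d : ℕ}

/-! ### Intrinsic interior via balls, for sets containing `0` -/

lemma span_coe_eq_affineSpan {s : Set (Fin d → ℝ)} (h0 : (0:Fin d → ℝ) ∈ s) :
    (affineSpan ℝ s : Set (Fin d → ℝ)) = (Submodule.span ℝ s : Set (Fin d → ℝ)) := by
  rw [← affineSpan_insert_zero, insert_eq_self.2 h0]

lemma mem_intrinsicInterior_iff_ball {s : Set (Fin d → ℝ)} (h0 : (0:Fin d → ℝ) ∈ s)
    (x : Fin d → ℝ) :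
    x ∈ intrinsicInterior ℝ s ↔ x ∈ Submodule.span ℝ s ∧
      ∃ ε > 0, ∀ y, y ∈ Submodule.span ℝ s → ‖y - x‖ < ε → y ∈ s := by
  have hspan := span_coe_eq_affineSpan h0
  constructor
  · rintro ⟨y, hy, rfl⟩
    have hyx : (y : Fin d → ℝ) ∈ Submodule.span ℝ s := by
      have := y.2
      rw [← SetLike.mem_coe, ← hspan] at *
      exact this
    refine ⟨hyx, ?_⟩
    rw [mem_interior_iff_mem_nhds, Metric.mem_nhds_iff] at hy
    obtain ⟨ε, hε, hball⟩ := hy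
    refine ⟨ε, hε, fun z hz hlt => ?_⟩
    have hz' : z ∈ affineSpan ℝ s := by rw [← SetLike.mem_coe, hspan]; exact hz
    have : (⟨z, hz'⟩ : affineSpan ℝ s) ∈ Metric.ball y ε := by
      simp only [Metric.mem_ball, Subtype.dist_eq, dist_eq_norm]
      exact hlt
    exact hball this
  · rintro ⟨hx, ε, hε, H⟩
    have hx' : x ∈ affineSpan ℝ s := by rw [← SetLike.mem_coe, hspan]; exact hx
    refine ⟨⟨x, hx'⟩, ?_, rfl⟩
    rw [mem_interior_iff_mem_nhds, Metric.mem_nhds_iff]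
    refine ⟨ε, hε, fun z hz => ?_⟩
    simp only [Metric.mem_ball, Subtype.dist_eq, dist_eq_norm] at hz
    have hzs : (z : Fin d → ℝ) ∈ Submodule.span ℝ s := by
      have := z.2
      rw [← SetLike.mem_coe, ← hspan]
      exact this
    exact H z hzs hz

/-! ### Images of intrinsic interiors under linear maps -/

lemma image_intrinsicInterior_subset (f : (Fin d → ℝ) →ₗ[ℝ] (Fin d → ℝ))
    {s : Set (Fin d → ℝ)} (h0 : (0:Fin d → ℝ) ∈ s) :
    f '' intrinsicInterior ℝ s ⊆ intrinsicInterior ℝ (f '' s) := by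
  rintro _ ⟨x, hx, rfl⟩
  obtain ⟨hxV, ε, hε, H⟩ := (mem_intrinsicInterior_iff_ball h0 x).1 hx
  have h0' : (0:Fin d → ℝ) ∈ f '' s := ⟨0, h0, map_zero f⟩
  set V := Submodule.span ℝ s with hV
  set W := Submodule.span ℝ (f '' s) with hW
  have hWmap : W = V.map f := (Submodule.map_span f s).symm
  have hmem : ∀ v : V, f v ∈ W := fun v => by
    rw [hWmap]; exact Submodule.mem_map_of_mem v.2
  let f' : V →ₗ[ℝ] W := (f.domRestrict V).codRestrict W hmem
  have hf'surj : LinearMap.range f' = ⊤ := by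
    rw [LinearMap.range_eq_top]
    rintro ⟨w, hw⟩
    rw [hWmap] at hw
    obtain ⟨v, hv, rfl⟩ := hw
    exact ⟨⟨v, hv⟩, rfl⟩
  obtain ⟨h, hh⟩ := f'.exists_rightInverse_of_surjective hf'surj
  obtain ⟨C, hC, hbound⟩ : ∃ C > 0, ∀ w : W, ‖h w‖ ≤ C * ‖w‖ := by
    obtain ⟨C, hC, hb⟩ := (LinearMap.toContinuousLinearMap h).isBoundedLinearMap.bound
    exact ⟨C, hC, fun w => hb w⟩
  rw [mem_intrinsicInterior_iff_ball h0']
  have hfxW : f x ∈ W := by rw [hWmap]; exact Submodule.mem_map_of_mem hxV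
  refine ⟨hfxW, ε / C, div_pos hε hC, fun y hyW hlt => ?_⟩
  have hdW : y - f x ∈ W := Submodule.sub_mem _ hyW hfxW
  set u : V := h ⟨y - f x, hdW⟩ with hu
  have hwV : x + (u : Fin d → ℝ) ∈ V := V.add_mem hxV u.2
  have hnorm : ‖(x + (u : Fin d → ℝ)) - x‖ < ε := by
    rw [add_sub_cancel_left]
    calc ‖(u : Fin d → ℝ)‖ = ‖u‖ := rfl
    _ ≤ C * ‖(⟨y - f x, hdW⟩ : W)‖ := hbound _
    _ = C * ‖y - f x‖ := rfl
    _ < C * (ε / C) := mul_lt_mul_of_pos_left hlt hC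
    _ = ε := by field_simp
  have hws : x + (u : Fin d → ℝ) ∈ s := H _ hwV hnorm
  refine ⟨x + (u : Fin d → ℝ), hws, ?_⟩
  have hfu : f (u : Fin d → ℝ) = y - f x := by
    have : f' u = ⟨y - f x, hdW⟩ := by
      have := LinearMap.congr_fun hh (⟨y - f x, hdW⟩ : W)
      simpa [hu] using this
    exact congrArg Subtype.val this
  rw [map_add, hfu]
  abel

/-! ### `0` is in the intrinsic interior of a symmetric convex set -/

lemma zero_mem_intrinsicInterior {s : Set (Fin d → ℝ)} (h0 : (0:Fin d → ℝ) ∈ s)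
    (hconv : Convex ℝ s) (hsymm : -s = s) : (0:Fin d → ℝ) ∈ intrinsicInterior ℝ s := by
  obtain ⟨z, hz⟩ := Set.Nonempty.intrinsicInterior hconv ⟨0, h0⟩
  obtain ⟨hzV, ε, hε, H⟩ := (mem_intrinsicInterior_iff_ball h0 z).1 hz
  rw [mem_intrinsicInterior_iff_ball h0]
  refine ⟨Submodule.zero_mem _, ε, hε, fun y hyV hlt => ?_⟩
  rw [sub_zero] at hlt
  have h1 : z + y ∈ s := by
    refine H _ (Submodule.add_mem _ hzV hyV) ?_
    simpa using hlt
  have h2 : z - y ∈ s := by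
    refine H _ (Submodule.sub_mem _ hzV hyV) ?_
    simpa using hlt
  have h2' : y - z ∈ s := by
    rw [← hsymm]
    simpa [Set.mem_neg] using h2
  have := hconv h1 h2' (by norm_num : (0:ℝ) ≤ 1/2) (by norm_num : (0:ℝ) ≤ 1/2) (by norm_num)
  convert this using 1
  module

/-! ### Basic properties of `trajHull` -/

lemma symCo_neg (X : Set (Fin d → ℝ)) : -(symCo X) = symCo X := by
  unfold symCo
  rw [← convexHull_neg]
  congr 1
  ext z
  simp only [Set.mem_neg, Set.mem_union]
  constructor
  · rintro (h | h)
    · exact Or.inr (by simpa [Set.mem_neg] using h)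
    · exact Or.inl (by simpa [Set.mem_neg] using h)
  · rintro (h | h)
    · exact Or.inr (by simpa [Set.mem_neg] using h)
    · exact Or.inl (by simpa [Set.mem_neg] using h)

lemma symCo_zero_mem {X : Set (Fin d → ℝ)} (hX : X.Nonempty) : (0:Fin d → ℝ) ∈ symCo X := by
  obtain ⟨x, hx⟩ := hX
  have h1 : x ∈ X ∪ (-X) := Or.inl hx
  have h2 : -x ∈ X ∪ (-X) := Or.inr (by simpa [Set.mem_neg] using hx)
  have := (convex_convexHull ℝ (X ∪ (-X))) (subset_convexHull ℝ _ h1) (subset_convexHull ℝ _ h2)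
    (by norm_num : (0:ℝ) ≤ 1/2) (by norm_num : (0:ℝ) ≤ 1/2) (by norm_num)
  convert this using 1
  · rfl
  · module

lemma trajHull_zero_mem (A : Matrix (Fin d) (Fin d) ℝ) (x₀ : Fin d → ℝ) :
    (0:Fin d → ℝ) ∈ trajHull A x₀ :=
  symCo_zero_mem ⟨traj A x₀ 0, mem_image_of_mem _ (le_refl (0:ℝ))⟩

lemma traj_mem_trajHull (A : Matrix (Fin d) (Fin d) ℝ) (x₀ : Fin d → ℝ) {t : ℝ} (ht : 0 ≤ t) :
    traj A x₀ t ∈ trajHull A x₀ :=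
  subset_convexHull ℝ _ (Or.inl (mem_image_of_mem _ ht))

/-! ### Algebraic structure of `minInv` -/

/-- the linear map `B ↦ B *ᵥ x₀`. -/
def mulVecAt (x₀ : Fin d → ℝ) : Matrix (Fin d) (Fin d) ℝ →ₗ[ℝ] (Fin d → ℝ) where
  toFun B := B.mulVec x₀
  map_add' B C := Matrix.add_mulVec B C x₀
  map_smul' c B := Matrix.smul_mulVec c B x₀

lemma exists_poly_matrix (A : Matrix (Fin d) (Fin d) ℝ) (x₀ : Fin d → ℝ) {y₀ : Fin d → ℝ}
    (hy₀ : y₀ ∈ minInv A x₀) :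
    ∃ B ∈ Submodule.span ℝ (Set.range fun n : ℕ => A ^ n), B.mulVec x₀ = y₀ := by
  have hS : minInv A x₀ ≤ Submodule.span ℝ (Set.range fun n : ℕ => (A ^ n).mulVec x₀) := by
    apply sInf_le
    constructor
    · exact Submodule.subset_span ⟨0, by simp [Matrix.one_mulVec]⟩
    · intro v hv
      have : Submodule.map (Matrix.mulVecLin A)
          (Submodule.span ℝ (Set.range fun n : ℕ => (A ^ n).mulVec x₀)) ≤
          Submodule.span ℝ (Set.range fun n : ℕ => (A ^ n).mulVec x₀) := by
        rw [Submodule.map_span, Submodule.span_le]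
        rintro _ ⟨_, ⟨n, rfl⟩, rfl⟩
        apply Submodule.subset_span
        exact ⟨n + 1, by simp [Matrix.mulVecLin_apply, Matrix.mulVec_mulVec, pow_succ']⟩
      exact this (Submodule.mem_map_of_mem hv)
  have hy : y₀ ∈ Submodule.span ℝ (Set.range fun n : ℕ => (A ^ n).mulVec x₀) := hS hy₀
  have himg : Submodule.span ℝ (Set.range fun n : ℕ => (A ^ n).mulVec x₀) =
      Submodule.map (mulVecAt x₀) (Submodule.span ℝ (Set.range fun n : ℕ => A ^ n)) := by
    rw [Submodule.map_span]
    congr 1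
    rw [← Set.range_comp]
    rfl
  rw [himg] at hy
  obtain ⟨B, hB, hBx⟩ := hy
  exact ⟨B, hB, hBx⟩

lemma commute_of_mem_span {A B : Matrix (Fin d) (Fin d) ℝ}
    (hB : B ∈ Submodule.span ℝ (Set.range fun n : ℕ => A ^ n)) : Commute A B := by
  induction hB using Submodule.span_induction with
  | mem x hx => obtain ⟨n, rfl⟩ := hx; exact (Commute.refl A).pow_right n
  | zero => exact Commute.zero_right A
  | add x y _ _ hx hy => exact hx.add_right hy
  | smul c x _ hx => exact hx.smul_right c

lemma exp_smul_comm (A B : Matrix (Fin d) (Fin d) ℝ) (hAB : Commute A B) (t : ℝ) :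
    B * NormedSpace.exp (t • A) = NormedSpace.exp (t • A) * B := by
  letI : SeminormedRing (Matrix (Fin d) (Fin d) ℝ) := Matrix.linftyOpSemiNormedRing
  letI : NormedRing (Matrix (Fin d) (Fin d) ℝ) := Matrix.linftyOpNormedRing
  letI : NormedAlgebra ℝ (Matrix (Fin d) (Fin d) ℝ) := Matrix.linftyOpNormedAlgebra
  exact ((hAB.symm.smul_right t).exp_right).eq

lemma traj_comm (A B : Matrix (Fin d) (Fin d) ℝ) (hAB : Commute A B) (x₀ : Fin d → ℝ) (t : ℝ) :
    traj A (B.mulVec x₀) t = B.mulVec (traj A x₀ t) := by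
  unfold traj
  rw [Matrix.mulVec_mulVec, Matrix.mulVec_mulVec, ← exp_smul_comm A B hAB t]

lemma image_neg_set (f : (Fin d → ℝ) →ₗ[ℝ] (Fin d → ℝ)) (X : Set (Fin d → ℝ)) :
    f '' (-X) = -(f '' X) := by
  ext z
  simp only [Set.mem_image, Set.mem_neg]
  constructor
  · rintro ⟨x, hx, rfl⟩
    exact ⟨-x, hx, by simp⟩
  · rintro ⟨x, hx, hfx⟩
    exact ⟨-x, by simpa [Set.mem_neg] using hx, by rw [map_neg, hfx, neg_neg]⟩

lemma trajHull_image (A B : Matrix (Fin d) (Fin d) ℝ) (hAB : Commute A B) (x₀ : Fin d → ℝ) :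
    trajHull A (B.mulVec x₀) = B.mulVecLin '' trajHull A x₀ := by
  unfold trajHull symCo
  rw [LinearMap.image_convexHull, Set.image_union, image_neg_set]
  have : traj A (B.mulVec x₀) '' Ici (0:ℝ) = B.mulVecLin '' (traj A x₀ '' Ici (0:ℝ)) := by
    rw [← Set.image_comp]
    apply congrArg (· '' Ici (0:ℝ))
    funext t
    simp only [Function.comp_apply, Matrix.mulVecLin_apply]
    exact traj_comm A B hAB x₀ t
  rw [this]

/-! ### Decay of trajectories of Hurwitz systems -/

open NormedSpace

attribute [local instance] Matrix.linftyOpSemiNormedRing Matrix.linftyOpNormedRing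
  Matrix.linftyOpNormedAlgebra

lemma isRoot_charpoly_of_eigen {M : Matrix (Fin d) (Fin d) ℂ} {μ : ℂ} {w : Fin d → ℂ}
    (hw : w ≠ 0) (hMw : M *ᵥ w = μ • w) : M.charpoly.IsRoot μ := by
  have hdet : ((Matrix.charmatrix M).map (Polynomial.evalRingHom μ)) = μ • 1 - M := by
    ext i j
    by_cases h : i = j
    · subst h
      simp [Matrix.charmatrix_apply_eq, Matrix.map_apply, Matrix.sub_apply, Matrix.smul_apply,
        Matrix.one_apply, smul_eq_mul]
    · simp [Matrix.charmatrix_apply_ne _ _ _ h, Matrix.map_apply, Matrix.sub_apply,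
        Matrix.smul_apply, Matrix.one_apply, h, smul_eq_mul]
  have hker : (μ • (1:Matrix (Fin d) (Fin d) ℂ) - M) *ᵥ w = 0 := by
    rw [Matrix.sub_mulVec, Matrix.smul_mulVec, Matrix.one_mulVec, hMw, sub_self]
  have hdet0 : (μ • (1:Matrix (Fin d) (Fin d) ℂ) - M).det = 0 :=
    (Matrix.exists_mulVec_eq_zero_iff).1 ⟨w, hw, hker⟩
  have : M.charpoly.eval μ = (μ • (1:Matrix (Fin d) (Fin d) ℂ) - M).det := by
    rw [Matrix.charpoly, ← hdet]
    have := RingHom.map_det (Polynomial.evalRingHom μ) (Matrix.charmatrix M)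
    simpa [RingHom.mapMatrix_apply] using this
  rwa [Polynomial.IsRoot, this]

lemma mulVecLin_pow (N : Matrix (Fin d) (Fin d) ℂ) (k : ℕ) :
    (N ^ k).mulVecLin = (N.mulVecLin) ^ k := by
  induction k with
  | zero => rw [pow_zero, pow_zero, Matrix.mulVecLin_one]; rfl
  | succ k ih => rw [pow_succ, pow_succ, Matrix.mulVecLin_mul, ih]; rfl

/-- the linear map `B ↦ B *ᵥ v` over `ℂ`. -/
def mulVecAtC (v : Fin d → ℂ) : Matrix (Fin d) (Fin d) ℂ →ₗ[ℂ] (Fin d → ℂ) where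
  toFun B := B.mulVec v
  map_add' B C := Matrix.add_mulVec B C v
  map_smul' c B := Matrix.smul_mulVec c B v

lemma genEigen_decay (M : Matrix (Fin d) (Fin d) ℂ) (μ : ℂ) (hμ : μ.re < 0) (v : Fin d → ℂ)
    (k : ℕ) (hv : ((M - μ • 1) ^ k) *ᵥ v = 0) :
    Tendsto (fun t : ℝ => exp ((t:ℂ) • M) *ᵥ v) atTop (𝓝 0) := by
  set N : Matrix (Fin d) (Fin d) ℂ := M - μ • 1 with hN
  have key1 : ∀ t : ℝ, exp ((t:ℂ) • M) = Complex.exp (t * μ) • exp ((t:ℂ) • N) := by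
    intro t
    have hsplit : (t:ℂ) • M = ((t:ℂ) * μ) • (1:Matrix (Fin d) (Fin d) ℂ) + (t:ℂ) • N := by
      rw [hN, smul_sub, smul_smul]
      abel
    have hcomm : Commute (((t:ℂ) * μ) • (1:Matrix (Fin d) (Fin d) ℂ)) ((t:ℂ) • N) :=
      ((Commute.one_left N).smul_left _).smul_right _
    rw [hsplit, Matrix.exp_add_of_commute _ _ hcomm]
    have hexp1 : exp (((t:ℂ) * μ) • (1:Matrix (Fin d) (Fin d) ℂ))
        = Complex.exp (t * μ) • (1:Matrix (Fin d) (Fin d) ℂ) := by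
      rw [← Algebra.algebraMap_eq_smul_one]
      erw [← algebraMap_exp_comm]
      rw [Complex.exp_eq_exp_ℂ, Algebra.algebraMap_eq_smul_one]
    rw [hexp1, smul_mul_assoc, one_mul]
  have key2 : ∀ t : ℝ, exp ((t:ℂ) • N) *ᵥ v
      = ∑ j ∈ Finset.range k, ((t:ℂ)^j * (j.factorial : ℂ)⁻¹) • (N^j *ᵥ v) := by
    intro t
    have hsum := expSeries_summable' (𝕂 := ℂ) ((t:ℂ) • N)
    have hL := (LinearMap.toContinuousLinearMap (mulVecAtC v)).map_tsum hsum
    have hexp : exp ((t:ℂ) • N) *ᵥ v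
        = ∑' n : ℕ, ((n.factorial : ℂ)⁻¹ • ((t:ℂ) • N)^n) *ᵥ v := by
      rw [exp_eq_tsum (𝕂 := ℂ)]
      exact hL
    rw [hexp]
    have hvanish : ∀ n ∉ Finset.range k, ((n.factorial : ℂ)⁻¹ • ((t:ℂ) • N)^n) *ᵥ v = 0 := by
      intro n hn
      rw [Finset.mem_range, not_lt] at hn
      have hNn : N^n *ᵥ v = 0 := by
        have hpow : N^(n-k) * N^k = N^n := by rw [← pow_add]; congr 1; omega
        rw [← hpow, ← Matrix.mulVec_mulVec, hv, Matrix.mulVec_zero]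
      rw [smul_pow, smul_smul, Matrix.smul_mulVec, hNn, smul_zero]
    rw [tsum_eq_sum hvanish]
    refine Finset.sum_congr rfl fun j _ => ?_
    rw [smul_pow, smul_smul, Matrix.smul_mulVec, mul_comm]
  have key3 : ∀ t : ℝ, 0 ≤ t → ‖exp ((t:ℂ) • M) *ᵥ v‖
      ≤ ∑ j ∈ Finset.range k,
        Real.exp (t * μ.re) * (t^j * ((j.factorial : ℝ)⁻¹ * ‖N^j *ᵥ v‖)) := by
    intro t ht
    rw [key1, Matrix.smul_mulVec, key2, norm_smul]
    have habs : ‖Complex.exp (t * μ)‖ = Real.exp (t * μ.re) := by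
      rw [Complex.norm_exp]
      congr 1
      simp [Complex.mul_re]
    rw [habs]
    calc Real.exp (t * μ.re) * ‖∑ j ∈ Finset.range k, ((t:ℂ)^j * (j.factorial : ℂ)⁻¹) • (N^j *ᵥ v)‖
        ≤ Real.exp (t * μ.re) * ∑ j ∈ Finset.range k,
            ‖((t:ℂ)^j * (j.factorial : ℂ)⁻¹) • (N^j *ᵥ v)‖ := by
          apply mul_le_mul_of_nonneg_left (norm_sum_le _ _) (Real.exp_nonneg _)
    _ = ∑ j ∈ Finset.range k, Real.exp (t * μ.re) * (t^j * ((j.factorial : ℝ)⁻¹ * ‖N^j *ᵥ v‖)) := by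
        rw [Finset.mul_sum]
        refine Finset.sum_congr rfl fun j _ => ?_
        congr 1
        rw [norm_smul, norm_mul, norm_pow, norm_inv]
        simp only [Complex.norm_real, Complex.norm_natCast, Real.norm_eq_abs]
        rw [abs_of_nonneg ht, mul_assoc]
  have key4 : Tendsto (fun t : ℝ => ∑ j ∈ Finset.range k,
      Real.exp (t * μ.re) * (t^j * ((j.factorial : ℝ)⁻¹ * ‖N^j *ᵥ v‖))) atTop (𝓝 0) := by
    have h0 : (0:ℝ) = ∑ j ∈ Finset.range k, (0:ℝ) := by simp
    rw [h0]
    apply tendsto_finset_sum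
    intro j _
    set δ : ℝ := -μ.re with hδ
    have hδpos : 0 < δ := by simp [hδ]; linarith
    have h1 : Tendsto (fun t : ℝ => (δ*t)^j * Real.exp (-(δ*t))) atTop (𝓝 0) :=
      (Real.tendsto_pow_mul_exp_neg_atTop_nhds_zero j).comp
        (Tendsto.const_mul_atTop hδpos tendsto_id)
    have h2 : Tendsto (fun t : ℝ => ((j.factorial : ℝ)⁻¹ * ‖N^j *ᵥ v‖ * δ⁻¹^j) *
        ((δ*t)^j * Real.exp (-(δ*t)))) atTop (𝓝 0) := by
      have := h1.const_mul ((j.factorial : ℝ)⁻¹ * ‖N^j *ᵥ v‖ * δ⁻¹^j)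
      simpa using this
    have hδj : δ⁻¹^j * δ^j = 1 := by
      rw [← mul_pow, inv_mul_cancel₀ (ne_of_gt hδpos), one_pow]
    refine h2.congr fun t => ?_
    have hexp : Real.exp (-(δ*t)) = Real.exp (t * μ.re) := by congr 1; rw [hδ]; ring
    calc ((j.factorial : ℝ)⁻¹ * ‖N^j *ᵥ v‖ * δ⁻¹^j) * ((δ*t)^j * Real.exp (-(δ*t)))
        = (δ⁻¹^j * δ^j) * (Real.exp (-(δ*t)) * (t^j * ((j.factorial : ℝ)⁻¹ * ‖N^j *ᵥ v‖))) := by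
          rw [mul_pow]; ring
    _ = Real.exp (t * μ.re) * (t^j * ((j.factorial : ℝ)⁻¹ * ‖N^j *ᵥ v‖)) := by
          rw [hδj, one_mul, hexp]
  apply squeeze_zero_norm' _ key4
  filter_upwards [eventually_ge_atTop (0:ℝ)] with t ht
  exact key3 t ht

lemma complex_decay (M : Matrix (Fin d) (Fin d) ℂ)
    (hroots : ∀ μ : ℂ, M.charpoly.IsRoot μ → μ.re < 0) (v : Fin d → ℂ) :
    Tendsto (fun t : ℝ => exp ((t:ℂ) • M) *ᵥ v) atTop (𝓝 0) := by
  set f : Module.End ℂ (Fin d → ℂ) := M.mulVecLin with hf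
  have htop : v ∈ ⨆ μ : ℂ, f.maxGenEigenspace μ := by
    rw [Module.End.iSup_maxGenEigenspace_eq_top f]
    trivial
  have hconv : ∀ (μ : ℂ) (k : ℕ) (w : Fin d → ℂ),
      ((f - μ • 1) ^ k) w = ((M - μ • 1) ^ k) *ᵥ w := by
    intro μ k w
    have h1 : (M - μ • 1).mulVecLin = f - μ • 1 := by
      apply LinearMap.ext
      intro u
      show (M - μ • 1) *ᵥ u = (f - μ • 1) u
      rw [Matrix.sub_mulVec, Matrix.smul_mulVec, Matrix.one_mulVec]
      simp [hf, Matrix.mulVecLin_apply]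
    rw [← h1, ← mulVecLin_pow]
    rfl
  refine Submodule.iSup_induction (x := v)
    (motive := fun w => Tendsto (fun t : ℝ => exp ((t:ℂ) • M) *ᵥ w) atTop (𝓝 0))
    (fun μ : ℂ => f.maxGenEigenspace μ) htop (fun μ w hw => ?_) ?_ (fun x y hx hy => ?_)
  · rcases eq_or_ne w 0 with rfl | hw0
    · simpa using tendsto_const_nhds
    obtain ⟨k, hk⟩ := (Module.End.mem_maxGenEigenspace f μ w).1 hw
    have hre : μ.re < 0 := by
      apply hroots
      have hev : f.HasEigenvalue μ := by
        apply Module.End.hasEigenvalue_of_hasGenEigenvalue (k := (k:ℕ))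
        rw [Module.End.hasGenEigenvalue_iff]
        rw [Submodule.ne_bot_iff]
        exact ⟨w, Module.End.mem_genEigenspace_nat.2 (by simpa using hk), hw0⟩
      obtain ⟨w', hw'⟩ := hev.exists_hasEigenvector
      exact isRoot_charpoly_of_eigen hw'.2 (by
        have := hw'.apply_eq_smul
        simpa [hf, Matrix.mulVecLin_apply] using this)
    exact genEigen_decay M μ hre w k (by rw [← hconv]; exact hk)
  · simpa using tendsto_const_nhds
  · have := hx.add hy
    simpa [Matrix.mulVec_add] using this

lemma traj_tendsto_zero (A : Matrix (Fin d) (Fin d) ℝ) (hA : IsHurwitz A) (x₀ : Fin d → ℝ) :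
    Tendsto (traj A x₀) atTop (𝓝 0) := by
  set M : Matrix (Fin d) (Fin d) ℂ := A.map (algebraMap ℝ ℂ) with hM
  set z₀ : Fin d → ℂ := fun i => (x₀ i : ℂ) with hz₀
  set φ : Matrix (Fin d) (Fin d) ℝ →+* Matrix (Fin d) (Fin d) ℂ :=
    (algebraMap ℝ ℂ : ℝ →+* ℂ).mapMatrix with hφ
  have hφcont : Continuous φ := by
    let η : Matrix (Fin d) (Fin d) ℝ →ₗ[ℝ] Matrix (Fin d) (Fin d) ℂ :=
      { toFun := fun X => X.map (algebraMap ℝ ℂ)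
        map_add' := fun X Y => by ext i j; simp [Matrix.map_apply, Matrix.add_apply]
        map_smul' := fun c X => by
          ext i j
          simp [Matrix.map_apply, Matrix.smul_apply, smul_eq_mul, Complex.ofReal_mul] }
    exact η.continuous_of_finiteDimensional
  have hkey : ∀ t : ℝ, (fun i => ((traj A x₀ t i : ℝ) : ℂ)) = exp ((t:ℂ) • M) *ᵥ z₀ := by
    intro t
    have hmap : φ (exp (t • A)) = exp (φ (t • A)) := map_exp φ hφcont (t • A)
    have hsmul : φ (t • A) = (t:ℂ) • M := by
      ext i j
      simp [hφ, RingHom.mapMatrix_apply, Matrix.map_apply, Matrix.smul_apply, hM,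
        smul_eq_mul, Complex.ofReal_mul, Complex.real_smul]
    have hexp2 : exp ((t:ℂ) • M) = exp ((t:ℂ) • M) := by
      rfl
    funext i
    have h5 := RingHom.map_mulVec (algebraMap ℝ ℂ : ℝ →+* ℂ) (exp (t • A)) x₀ i
    unfold traj
    rw [← Complex.coe_algebraMap, h5]
    rw [show (exp (t • A)).map (algebraMap ℝ ℂ) = φ (exp (t • A)) from rfl,
      hmap, hsmul, hexp2]
    rfl
  have hC : Tendsto (fun t : ℝ => exp ((t:ℂ) • M) *ᵥ z₀) atTop (𝓝 0) :=
    complex_decay M hA z₀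
  rw [tendsto_pi_nhds]
  intro i
  have hCi : Tendsto (fun t : ℝ => (exp ((t:ℂ) • M) *ᵥ z₀) i) atTop (𝓝 0) := by
    have := tendsto_pi_nhds.1 hC i
    simpa using this
  have hre : Tendsto (fun t : ℝ => ((exp ((t:ℂ) • M) *ᵥ z₀) i).re) atTop (𝓝 0) := by
    have := (Complex.continuous_re.tendsto 0).comp hCi
    exact this
  refine hre.congr fun t => ?_
  rw [← hkey t]
  simp

/-! ### Existence of cut tail points -/

lemma exists_cutTailPoint (A : Matrix (Fin d) (Fin d) ℝ) (hA : IsHurwitz A) (x₀ : Fin d → ℝ) :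
    ∃ T, IsCutTailPoint A x₀ T := by
  have h0 : (0:Fin d → ℝ) ∈ trajHull A x₀ := trajHull_zero_mem A x₀
  have hzero : (0:Fin d → ℝ) ∈ intrinsicInterior ℝ (trajHull A x₀) :=
    zero_mem_intrinsicInterior h0 (convex_convexHull ℝ _) (symCo_neg _)
  obtain ⟨-, ε, hε, H⟩ := (mem_intrinsicInterior_iff_ball h0 0).1 hzero
  have hdec := traj_tendsto_zero A hA x₀
  have hev : ∀ᶠ t in atTop, dist (traj A x₀ t) 0 < ε/2 :=
    Metric.tendsto_nhds.mp hdec (ε/2) (by linarith)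
  obtain ⟨T₀, hT₀⟩ := eventually_atTop.mp hev
  refine ⟨max T₀ 1, lt_of_lt_of_le one_pos (le_max_right _ _), fun t ht => ?_⟩
  have ht0 : (0:ℝ) ≤ t := le_trans (le_trans zero_le_one (le_max_right T₀ 1)) ht
  have htsmall : ‖traj A x₀ t‖ < ε/2 := by
    have := hT₀ t (le_trans (le_max_left T₀ 1) ht)
    rwa [dist_zero_right] at this
  rw [mem_intrinsicInterior_iff_ball h0]
  refine ⟨Submodule.subset_span (traj_mem_trajHull A x₀ ht0), ε/2, by linarith,
    fun y hy hlt => ?_⟩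
  refine H y hy ?_
  rw [sub_zero]
  calc ‖y‖ = ‖(y - traj A x₀ t) + traj A x₀ t‖ := by ring_nf
  _ ≤ ‖y - traj A x₀ t‖ + ‖traj A x₀ t‖ := norm_add_le _ _
  _ < ε/2 + ε/2 := add_lt_add hlt htsmall
  _ = ε := by ring

/-! ### Transfer of cut tail points -/

lemma isCutTailPoint_mono {A B : Matrix (Fin d) (Fin d) ℝ} (hAB : Commute A B)
    (x₀ : Fin d → ℝ) {T : ℝ} (hT : IsCutTailPoint A x₀ T) :
    IsCutTailPoint A (B.mulVec x₀) T := by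
  obtain ⟨hTpos, hmem⟩ := hT
  refine ⟨hTpos, fun t ht => ?_⟩
  rw [traj_comm A B hAB x₀ t, trajHull_image A B hAB x₀]
  have : B.mulVec (traj A x₀ t) ∈ B.mulVecLin '' intrinsicInterior ℝ (trajHull A x₀) :=
    ⟨traj A x₀ t, hmem t ht, rfl⟩
  exact image_intrinsicInterior_subset B.mulVecLin (trajHull_zero_mem A x₀) this

end TcutAux

/-- (Proposition 2) For every `y₀ ∈ L_{x₀}` one has `T_cut(y₀) ≤ T_cut(x₀)`. -/
theorem Tcut_mono_of_mem_minInv {d : ℕ} (A : Matrix (Fin d) (Fin d) ℝ) (hA : IsHurwitz A)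
    (x₀ : Fin d → ℝ) (hx₀ : x₀ ≠ 0) (y₀ : Fin d → ℝ) (hy₀ : y₀ ∈ minInv A x₀) :
    Tcut A y₀ ≤ Tcut A x₀ := by
  obtain ⟨B, hB, rfl⟩ := TcutAux.exists_poly_matrix A x₀ hy₀
  have hAB := TcutAux.commute_of_mem_span hB
  apply csInf_le_csInf
  · exact ⟨0, fun T hT => le_of_lt hT.1⟩
  · obtain ⟨T, hT⟩ := TcutAux.exists_cutTailPoint A hA x₀
    exact ⟨T, hT⟩
  · intro T hT
    exact TcutAux.isCutTailPoint_mono hAB x₀ hT
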